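/- Let q ∈ ℂ with 0<|q|<1 and q not a root of unity, t ∈ ℂ×, and P ∈ ℂ[z,z⁻¹] a Laurent polynomial with n > 0 nonzero roots counted with multiplicity. Then the space of linear functionals T: ℂ[z,z⁻¹] → ℂ satisfying T(P(q⁻¹z)R(q⁻¹z) − t·P(qz)R(qz)) = 0 for all Laurent polynomials R has dimension n. -/

import Mathlib

open Complex

/-- Multiplication of Laurent polynomials given as coefficient functions `ℤ →₀ ℂ`. -/
noncomputable def laurentMul (P R : ℤ →₀ ℂ) : ℤ →₀ ℂ :=
  P.sum fun k c => R.sum fun l d => Finsupp.single (k + l) (c * d)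

/-- The substitution `z ↦ c·z` on Laurent polynomials: `S(z) ↦ S(c z)`. -/
noncomputable def laurentScale (c : ℂ) (S : ℤ →₀ ℂ) : ℤ →₀ ℂ :=
  S.sum fun k a => Finsupp.single k (c ^ k * a)


open Finset

namespace TT

variable (n : ℕ) (c : ℕ → ℂ)

/-- Solutions of the constant-coefficient recurrence. -/
noncomputable def solSet : Submodule ℂ (ℤ → ℂ) :=
  ⨅ m : ℤ, LinearMap.ker
    (∑ d ∈ Finset.range (n+1), c d • LinearMap.proj (m + d : ℤ) : (ℤ → ℂ) →ₗ[ℂ] ℂ)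

lemma mem_solSet {ν : ℤ → ℂ} :
    ν ∈ solSet n c ↔ ∀ m : ℤ, ∑ d ∈ Finset.range (n+1), c d * ν (m + d) = 0 := by
  simp [solSet, Submodule.mem_iInf, LinearMap.mem_ker, LinearMap.sum_apply,
    LinearMap.smul_apply, LinearMap.proj_apply, smul_eq_mul]

noncomputable def upSeq (w : ℕ → ℂ) : ℕ → ℂ
  | j =>
    if _h : j < n then w j
    else -(c n)⁻¹ * ∑ d ∈ (Finset.range n).attach,
      c d.1 * upSeq w (j - (n - d.1))
  decreasing_by
    have hd := d.2
    simp only [Finset.mem_range] at hd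
    have h1 : n ≤ j := le_of_not_gt _h
    exact Nat.sub_lt (lt_of_lt_of_le (Nat.zero_lt_of_lt hd) h1) (Nat.sub_pos_of_lt hd)

noncomputable def downSeq (w : ℕ → ℂ) : ℕ → ℂ
  | j => -(c 0)⁻¹ * ∑ d ∈ (Finset.range n).attach,
      c (d.1 + 1) *
        (if h : d.1 + 1 ≤ j then downSeq w (j - (d.1 + 1)) else upSeq n c w (d.1 - j))
  decreasing_by
    exact Nat.sub_lt (lt_of_lt_of_le (Nat.succ_pos _) h) (Nat.succ_pos _)

noncomputable def extSeq (w : ℕ → ℂ) (a : ℤ) : ℤ → ℂ := fun i =>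
  if a ≤ i then upSeq n c w (i - a).toNat else downSeq n c w (a - 1 - i).toNat

variable {n c}

lemma extSeq_window (w : ℕ → ℂ) (a : ℤ) {i : ℕ} (hi : i < n) :
    extSeq n c w a (a + i) = w i := by
  have h1 : a ≤ a + i := by omega
  have h2 : ((a + i - a : ℤ)).toNat = i := by omega
  rw [extSeq]
  simp only [if_pos h1, h2]
  rw [upSeq]
  simp [hi]

lemma extSeq_mem (hcn : c n ≠ 0) (hc0 : c 0 ≠ 0) (w : ℕ → ℂ) (a : ℤ) :
    extSeq n c w a ∈ solSet n c := by
  rw [mem_solSet]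
  intro m
  rcases le_or_gt a m with ham | ham
  · -- all indices ≥ a : use upSeq equation
    set j : ℕ := (m + n - a).toNat with hj
    have hjn : n ≤ j := by omega
    have hterm : ∀ d ∈ Finset.range (n+1),
        c d * extSeq n c w a (m + d) = c d * upSeq n c w (j - (n - d)) := by
      intro d hd
      simp only [Finset.mem_range] at hd
      have h1 : a ≤ m + d := by omega
      have h2 : ((m + d - a : ℤ)).toNat = j - (n - d) := by omega
      rw [extSeq]
      simp only [if_pos h1, h2]
    rw [Finset.sum_congr rfl hterm, Finset.sum_range_succ]
    have hupj : upSeq n c w j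
        = -(c n)⁻¹ * ∑ d ∈ (Finset.range n).attach, c d.1 * upSeq n c w (j - (n - d.1)) := by
      rw [upSeq]
      simp only [dif_neg (by omega : ¬ j < n)]
    have hsub : (j - (n - n)) = j := by omega
    rw [hsub, hupj,
      Finset.sum_attach (Finset.range n) (fun d => c d * upSeq n c w (j - (n - d)))]
    field_simp
    ring
  · -- bottom index < a : use downSeq equation
    set j : ℕ := (a - 1 - m).toNat with hj
    rw [Finset.sum_range_succ']
    have h0 : extSeq n c w a (m + ((0:ℕ):ℤ)) = downSeq n c w j := by
      rw [extSeq]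
      rw [if_neg (by push_cast; omega)]
      congr 1
      push_cast
      omega
    have hterm : ∀ e ∈ Finset.range n,
        c (e+1) * extSeq n c w a (m + ((e + 1 : ℕ) : ℤ))
          = c (e+1) * (if _h : e + 1 ≤ j then downSeq n c w (j - (e+1)) else upSeq n c w (e - j)) := by
      intro e he
      congr 1
      by_cases h : e + 1 ≤ j
      · rw [dif_pos h, extSeq, if_neg (by push_cast; omega)]
        congr 1
        push_cast
        omega
      · rw [dif_neg h, extSeq, if_pos (by push_cast; omega)]
        congr 1
        push_cast
        omega
    rw [Finset.sum_congr rfl hterm, h0]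
    have hdownj : downSeq n c w j
        = -(c 0)⁻¹ * ∑ d ∈ (Finset.range n).attach, c (d.1 + 1) *
            (if _h : d.1 + 1 ≤ j then downSeq n c w (j - (d.1+1)) else upSeq n c w (d.1 - j)) := by
      rw [downSeq]
    rw [hdownj,
      Finset.sum_attach (Finset.range n) (fun e => c (e + 1) *
        (if _h : e + 1 ≤ j then downSeq n c w (j - (e+1)) else upSeq n c w (e - j)))]
    field_simp
    ring

lemma solSet_exists (hcn : c n ≠ 0) (hc0 : c 0 ≠ 0) (a : ℤ) (w : ℕ → ℂ) :
    ∃ ν ∈ solSet n c, ∀ i : ℕ, i < n → ν (a + i) = w i :=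
  ⟨extSeq n c w a, extSeq_mem hcn hc0 w a, fun _ hi => extSeq_window w a hi⟩

lemma solSet_unique (hcn : c n ≠ 0) (hc0 : c 0 ≠ 0) {ν : ℤ → ℂ}
    (hν : ν ∈ solSet n c) (a : ℤ) (hw : ∀ i : ℕ, i < n → ν (a + i) = 0) : ν = 0 := by
  rw [mem_solSet] at hν
  have up0 : ∀ j : ℕ, ν (a + j) = 0 := by
    intro j
    induction j using Nat.strong_induction_on with
    | _ j ih =>
      by_cases h : j < n
      · exact hw j h
      · have heq := hν (a + j - n)
        rw [Finset.sum_range_succ] at heq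
        have hz : ∀ d ∈ Finset.range n, c d * ν (a + j - n + d) = 0 := by
          intro d hd
          simp only [Finset.mem_range] at hd
          have h1 : (a + (j:ℤ) - n + d : ℤ) = a + ((j - n + d : ℕ) : ℤ) := by push_cast; omega
          rw [h1, ih _ (by omega), mul_zero]
        rw [Finset.sum_eq_zero hz, zero_add] at heq
        have h2 : (a + (j:ℤ) - n + n : ℤ) = a + j := by omega
        rw [h2] at heq
        exact (mul_eq_zero.1 heq).resolve_left hcn
  have down0 : ∀ j : ℕ, ν (a - 1 - j) = 0 := by
    intro j
    induction j using Nat.strong_induction_on with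
    | _ j ih =>
      have heq := hν (a - 1 - j)
      rw [Finset.sum_range_succ'] at heq
      have hz : ∀ e ∈ Finset.range n, c (e + 1) * ν (a - 1 - j + ((e + 1 : ℕ) : ℤ)) = 0 := by
        intro e he
        by_cases h : e + 1 ≤ j
        · have h1 : (a - 1 - j + ((e + 1 : ℕ) : ℤ) : ℤ) = a - 1 - ((j - (e+1) : ℕ) : ℤ) := by
            push_cast; omega
          rw [h1, ih _ (by omega), mul_zero]
        · have h1 : (a - 1 - j + ((e + 1 : ℕ) : ℤ) : ℤ) = a + ((e - j : ℕ) : ℤ) := by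
            push_cast; omega
          rw [h1, up0, mul_zero]
      rw [Finset.sum_eq_zero hz, zero_add] at heq
      have h2 : (a - 1 - (j:ℤ) + ((0:ℕ):ℤ) : ℤ) = a - 1 - j := by push_cast; omega
      rw [h2] at heq
      exact (mul_eq_zero.1 heq).resolve_left hc0
  funext i
  rcases le_or_gt a i with h | h
  · have hi : i = a + ((i - a).toNat : ℤ) := by omega
    rw [hi, up0]
    rfl
  · have hi : i = a - 1 - ((a - 1 - i).toNat : ℤ) := by omega
    rw [hi, down0]
    rfl

end TT

namespace TT

lemma laurentScale_single (c : ℂ) (m : ℤ) (b : ℂ) :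
    laurentScale c (Finsupp.single m b) = Finsupp.single m (c ^ m * b) := by
  rw [laurentScale, Finsupp.sum_single_index (by simp)]

lemma laurentMul_single_right (Q : ℤ →₀ ℂ) (m : ℤ) (b : ℂ) :
    laurentMul Q (Finsupp.single m b) = Q.sum fun j a => Finsupp.single (j + m) (a * b) := by
  rw [laurentMul]
  exact Finsupp.sum_congr fun j _ => Finsupp.sum_single_index (by simp)

lemma laurentScale_add (c : ℂ) (R S : ℤ →₀ ℂ) :
    laurentScale c (R + S) = laurentScale c R + laurentScale c S :=
  Finsupp.sum_add_index (by simp) (by intros; rw [mul_add, Finsupp.single_add])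

lemma laurentScale_smul (c a : ℂ) (R : ℤ →₀ ℂ) :
    laurentScale c (a • R) = a • laurentScale c R := by
  rw [laurentScale, laurentScale, Finsupp.sum_smul_index (by simp), Finsupp.smul_sum]
  exact Finsupp.sum_congr fun j _ => by
    rw [Finsupp.smul_single, smul_eq_mul]
    congr 1
    ring

lemma laurentMul_add_right (Q R S : ℤ →₀ ℂ) :
    laurentMul Q (R + S) = laurentMul Q R + laurentMul Q S := by
  rw [laurentMul, laurentMul, laurentMul, ← Finsupp.sum_add]
  exact Finsupp.sum_congr fun j _ =>
    Finsupp.sum_add_index (by simp) (by intros; rw [mul_add, Finsupp.single_add])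

lemma laurentMul_smul_right (Q : ℤ →₀ ℂ) (a : ℂ) (R : ℤ →₀ ℂ) :
    laurentMul Q (a • R) = a • laurentMul Q R := by
  rw [laurentMul, laurentMul, Finsupp.smul_sum]
  refine Finsupp.sum_congr fun j _ => ?_
  rw [Finsupp.sum_smul_index (by simp), Finsupp.smul_sum]
  exact Finsupp.sum_congr fun i _ => by
    rw [Finsupp.smul_single, smul_eq_mul]
    congr 1
    ring

/-- The twisting operator, as a linear map in `R`. -/
noncomputable def DqL (q t : ℂ) (P : ℤ →₀ ℂ) : (ℤ →₀ ℂ) →ₗ[ℂ] (ℤ →₀ ℂ) where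
  toFun R := laurentMul (laurentScale q⁻¹ P) (laurentScale q⁻¹ R)
    - t • laurentMul (laurentScale q P) (laurentScale q R)
  map_add' R S := by
    rw [laurentScale_add, laurentScale_add, laurentMul_add_right, laurentMul_add_right]
    rw [smul_add]
    abel
  map_smul' a R := by
    rw [laurentScale_smul, laurentScale_smul, laurentMul_smul_right, laurentMul_smul_right,
      RingHom.id_apply, smul_sub, smul_comm a t]

lemma mul_scale_single (cq : ℂ) (hcq : cq ≠ 0) (P : ℤ →₀ ℂ) (m : ℤ) :
    laurentMul (laurentScale cq P) (laurentScale cq (Finsupp.single m 1))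
      = P.sum fun j a => Finsupp.single (j + m) (cq ^ (j + m) * a) := by
  rw [laurentScale_single, mul_one, laurentMul_single_right, laurentScale,
    Finsupp.sum_sum_index (by simp) (by intros; rw [add_mul, Finsupp.single_add])]
  refine Finsupp.sum_congr fun j _ => ?_
  rw [Finsupp.sum_single_index (by simp), zpow_add₀ hcq]
  ring_nf

lemma T_single (T : (ℤ →₀ ℂ) →ₗ[ℂ] ℂ) (i : ℤ) (x : ℂ) :
    T (Finsupp.single i x) = x * T (Finsupp.single i 1) := by
  have : Finsupp.single i x = x • Finsupp.single i (1:ℂ) := by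
    rw [Finsupp.smul_single, smul_eq_mul, mul_one]
  rw [this, map_smul, smul_eq_mul]

lemma T_DqL_single (q t : ℂ) (hq : q ≠ 0) (P : ℤ →₀ ℂ) (T : (ℤ →₀ ℂ) →ₗ[ℂ] ℂ) (m : ℤ) :
    T (DqL q t P (Finsupp.single m 1))
      = ∑ j ∈ P.support, (P j * (q ^ (-(j + m)) - t * q ^ (j + m)))
          * T (Finsupp.single (j + m) 1) := by
  have hq' : q⁻¹ ≠ 0 := inv_ne_zero hq
  rw [DqL]
  simp only [LinearMap.coe_mk, AddHom.coe_mk]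
  rw [map_sub, map_smul, mul_scale_single q⁻¹ hq' P m, mul_scale_single q hq P m,
    map_finsuppSum, map_finsuppSum]
  rw [Finsupp.sum, Finsupp.sum, smul_eq_mul, Finset.mul_sum, ← Finset.sum_sub_distrib]
  refine Finset.sum_congr rfl fun j _ => ?_
  have h2 : (q⁻¹) ^ (j + m) = q ^ (-(j+m)) := by
    rw [inv_zpow, ← zpow_neg]
  rw [h2, T_single T (j + m) (q ^ (-(j+m)) * P j), T_single T (j + m) (q ^ (j + m) * P j)]
  ring

end TT

namespace TT

lemma zpow_ne_one' (q : ℂ) (hqru : ∀ m : ℕ, m ≠ 0 → q ^ m ≠ 1) {z : ℤ} (hz : z ≠ 0) :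
    q ^ z ≠ 1 := by
  intro h
  rcases lt_trichotomy z 0 with hneg | h0 | hpos
  · have h1 : q ^ (-z) = 1 := by rw [zpow_neg, h, inv_one]
    have hz2 : (-z) = (((-z).toNat : ℕ) : ℤ) := by omega
    rw [hz2, zpow_natCast] at h1
    exact hqru _ (by omega) h1
  · exact hz h0
  · have hz2 : z = ((z.toNat : ℕ) : ℤ) := by omega
    rw [hz2, zpow_natCast] at h
    exact hqru _ (by omega) h

end TT

theorem dim_twisted_traces (q t : ℂ) (hq0 : q ≠ 0) (hqabs0 : 0 < ‖q‖)
    (hqabs1 : ‖q‖ < 1) (hqru : ∀ m : ℕ, m ≠ 0 → q ^ m ≠ 1) (ht : t ≠ 0)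
    (P : ℤ →₀ ℂ) (k l : ℤ) (hkl : l ≤ k) (htop : P k ≠ 0) (hbot : P l ≠ 0)
    (hsupp : ∀ m : ℤ, P m ≠ 0 → l ≤ m ∧ m ≤ k)
    (n : ℕ) (hn : (n : ℤ) = k - l) (hnpos : 0 < n) :
    Module.rank ℂ
      ↥(⨅ R : ℤ →₀ ℂ, LinearMap.ker
        (LinearMap.applyₗ
          (laurentMul (laurentScale q⁻¹ P) (laurentScale q⁻¹ R)
            - t • laurentMul (laurentScale q P) (laurentScale q R)) :
          ((ℤ →₀ ℂ) →ₗ[ℂ] ℂ) →ₗ[ℂ] ℂ)) = n := by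
  classical
  set dd : ℤ → ℂ := fun i => q ^ (-i) - t * q ^ i with hdd
  set cc : ℕ → ℂ := fun d => P (l + d) with hcc
  have hccn : cc n ≠ 0 := by
    have hk : l + (n : ℤ) = k := by omega
    simpa [hcc, hk] using htop
  have hcc0 : cc 0 ≠ 0 := by simpa [hcc] using hbot
  have hq2 : ∀ i : ℤ, dd i = 0 → t = q ^ (-(2*i)) := by
    intro i h
    have h1 : q ^ (-i) = t * q ^ i := sub_eq_zero.mp h
    have hne : q ^ i * q ^ i ≠ 0 := mul_ne_zero (zpow_ne_zero _ hq0) (zpow_ne_zero _ hq0)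
    have h2 : t * (q ^ i * q ^ i) = 1 := by
      calc t * (q ^ i * q ^ i) = (t * q ^ i) * q ^ i := by ring
        _ = q ^ (-i) * q ^ i := by rw [← h1]
        _ = 1 := by
            rw [← zpow_add₀ hq0, show (-i + i : ℤ) = 0 from by ring, zpow_zero]
    have h3 : q ^ (-(2*i)) * (q ^ i * q ^ i) = 1 := by
      rw [← zpow_add₀ hq0, ← zpow_add₀ hq0, show (-(2*i) + (i+i) : ℤ) = 0 from by ring, zpow_zero]
    exact mul_right_cancel₀ hne (h2.trans h3.symm)
  have hdd_unique : ∀ i i' : ℤ, dd i = 0 → dd i' = 0 → i = i' := by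
    intro i i' h h'
    by_contra hne
    have e : q ^ (-(2*i)) = q ^ (-(2*i')) := (hq2 i h).symm.trans (hq2 i' h')
    have h1 : q ^ (-(2*i) + 2*i') = 1 := by
      rw [zpow_add₀ hq0, e, ← zpow_add₀ hq0]
      norm_num
    exact TT.zpow_ne_one' q hqru (by omega) h1
  -- the subspace S of moment sequences
  set S : Submodule ℂ (ℤ → ℂ) := ⨅ m : ℤ, LinearMap.ker
      ((∑ j ∈ P.support, (P j * dd (j + m)) • LinearMap.proj (j + m) : (ℤ → ℂ) →ₗ[ℂ] ℂ)) with hS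
  have hmemS : ∀ μ : ℤ → ℂ, μ ∈ S ↔
      ∀ m : ℤ, ∑ j ∈ P.support, (P j * dd (j + m)) * μ (j + m) = 0 := by
    intro μ
    simp [hS, Submodule.mem_iInf, LinearMap.mem_ker, LinearMap.sum_apply,
      LinearMap.smul_apply, LinearMap.proj_apply, smul_eq_mul]
  -- bridge between support sums and range sums
  have bridge : ∀ (ν : ℤ → ℂ) (m : ℤ),
      ∑ j ∈ P.support, P j * ν (j + m) = ∑ d ∈ Finset.range (n+1), cc d * ν ((m + l) + d) := by
    intro ν m
    have hsub : P.support ⊆ Finset.Icc l k := fun j hj =>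
      Finset.mem_Icc.2 (hsupp j (Finsupp.mem_support_iff.1 hj))
    rw [Finset.sum_subset hsub (fun x _ hx => by
      rw [Finsupp.notMem_support_iff.1 hx, zero_mul])]
    refine Finset.sum_nbij' (fun j => (j - l).toNat) (fun d => l + d) ?_ ?_ ?_ ?_ ?_
    · intro a ha; simp only [Finset.mem_Icc] at ha; simp only [Finset.mem_range]; omega
    · intro a ha; simp only [Finset.mem_range] at ha; simp only [Finset.mem_Icc]; omega
    · intro a ha; simp only [Finset.mem_Icc] at ha; omega
    · intro a ha; simp only [Finset.mem_range] at ha; omega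
    · intro a ha
      simp only [Finset.mem_Icc] at ha
      have h1 : cc ((a - l).toNat) = P a := by rw [hcc]; simp only; congr 1; omega
      have h2 : ((m + l) + (((a - l).toNat : ℕ) : ℤ)) = a + m := by omega
      rw [h1, h2]
  -- scaled sequences of S-members solve the recurrence
  have hsol : ∀ μ : ℤ → ℂ, μ ∈ S → (fun i => dd i * μ i) ∈ TT.solSet n cc := by
    intro μ hμ
    rw [TT.mem_solSet]
    intro m'
    have h1 := (hmemS μ).1 hμ (m' - l)
    have hb := bridge (fun i => dd i * μ i) (m' - l)
    rw [show m' - l + l = m' by ring] at hb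
    rw [← hb, ← h1]
    exact Finset.sum_congr rfl fun j _ => by ring
  -- dual space to sequences
  set evalT : ((ℤ →₀ ℂ) →ₗ[ℂ] ℂ) →ₗ[ℂ] (ℤ → ℂ) :=
    LinearMap.pi (fun m => LinearMap.applyₗ (Finsupp.single m (1:ℂ))) with hevalT
  have hevalT_apply : ∀ (T : (ℤ →₀ ℂ) →ₗ[ℂ] ℂ) (m : ℤ), evalT T m = T (Finsupp.single m 1) :=
    fun T m => rfl
  have hbij : Function.Bijective evalT := by
    constructor
    · intro T T' h
      refine Finsupp.lhom_ext fun a b => ?_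
      rw [TT.T_single, TT.T_single T', ← hevalT_apply, ← hevalT_apply, h]
    · intro μ
      refine ⟨Finsupp.lsum ℂ (fun m => LinearMap.toSpanSingleton ℂ ℂ (μ m)), ?_⟩
      funext m
      rw [hevalT_apply, Finsupp.lsum_single, LinearMap.toSpanSingleton_apply, one_smul]
  -- identify the subspace with the comap of S
  have happly : ∀ (x : ℤ →₀ ℂ) (T : (ℤ →₀ ℂ) →ₗ[ℂ] ℂ), LinearMap.applyₗ x T = T x :=
    fun _ _ => rfl
  have hp : (⨅ R : ℤ →₀ ℂ, LinearMap.ker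
        (LinearMap.applyₗ
          (laurentMul (laurentScale q⁻¹ P) (laurentScale q⁻¹ R)
            - t • laurentMul (laurentScale q P) (laurentScale q R)) :
          ((ℤ →₀ ℂ) →ₗ[ℂ] ℂ) →ₗ[ℂ] ℂ)) = S.comap evalT := by
    ext T
    have hkey : ∀ m : ℤ, T (TT.DqL q t P (Finsupp.single m 1))
        = ∑ j ∈ P.support, (P j * dd (j + m)) * T (Finsupp.single (j + m) 1) :=
      fun m => TT.T_DqL_single q t hq0 P T m
    simp only [Submodule.mem_iInf, LinearMap.mem_ker, happly, Submodule.mem_comap]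
    rw [hmemS]
    constructor
    · intro h m
      have h1 := h (Finsupp.single m 1)
      have h2 : T (TT.DqL q t P (Finsupp.single m 1)) = 0 := h1
      rw [hkey m] at h2
      simpa only [hevalT_apply] using h2
    · intro h R
      have hz : ∀ m : ℤ, T (TT.DqL q t P (Finsupp.single m 1)) = 0 := by
        intro m
        rw [hkey m]
        simpa only [hevalT_apply] using h m
      have hR : (TT.DqL q t P) R = R.sum fun m b => (TT.DqL q t P) (Finsupp.single m b) := by
        conv_lhs => rw [← Finsupp.sum_single R]
        exact map_finsuppSum _ _ _
      show T (TT.DqL q t P R) = 0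
      rw [hR, map_finsuppSum, Finsupp.sum]
      refine Finset.sum_eq_zero fun m _ => ?_
      have hsm : Finsupp.single m (R m) = (R m) • Finsupp.single m (1:ℂ) := by
        rw [Finsupp.smul_single, smul_eq_mul, mul_one]
      rw [hsm, map_smul, map_smul, smul_eq_mul, hz m, mul_zero]
  rw [hp]
  -- transfer rank through the equivalence
  set e := LinearEquiv.ofBijective evalT hbij with he
  have hmap : Submodule.map (e : ((ℤ →₀ ℂ) →ₗ[ℂ] ℂ) →ₗ[ℂ] (ℤ → ℂ)) (S.comap evalT) = S := by
    have hco : (e : ((ℤ →₀ ℂ) →ₗ[ℂ] ℂ) →ₗ[ℂ] (ℤ → ℂ)) = evalT := rfl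
    rw [hco]
    exact Submodule.map_comap_eq_of_surjective hbij.2 S
  have hrank1 : Module.rank ℂ ↥(S.comap evalT) = Module.rank ℂ ↥S := by
    rw [(e.submoduleMap (S.comap evalT)).rank_eq, hmap]
  rw [hrank1]
  -- now compute the rank of S
  suffices hfin : ∃ eq : ↥S ≃ₗ[ℂ] (Fin n → ℂ), True by
    obtain ⟨eq, -⟩ := hfin
    rw [eq.rank_eq, rank_fin_fun]
  by_cases hA : ∀ i : ℤ, dd i ≠ 0
  · -- no zero coefficient
    set Θ : ↥S →ₗ[ℂ] (Fin n → ℂ) := {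
      toFun := fun μ => fun i => dd (l + ((i:ℕ):ℤ)) * (μ : ℤ → ℂ) (l + ((i:ℕ):ℤ)),
      map_add' := by
        intro μ ν
        funext i
        simp only [Submodule.coe_add, Pi.add_apply]
        ring
      map_smul' := by
        intro a μ
        funext i
        simp only [SetLike.val_smul, Pi.smul_apply, smul_eq_mul, RingHom.id_apply]
        ring } with hΘ
    have hinj : ∀ μ : ↥S, Θ μ = 0 → μ = 0 := by
      intro μ hμ0
      have hν := hsol μ.1 μ.2
      have hw : ∀ i : ℕ, i < n → (fun x => dd x * μ.1 x) (l + (i:ℤ)) = 0 := by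
        intro i hi
        have h1 := congrFun hμ0 ⟨i, hi⟩
        simpa [hΘ] using h1
      have hz := TT.solSet_unique hccn hcc0 hν l hw
      refine Subtype.ext (funext fun x => ?_)
      have h2 := congrFun hz x
      simp only [Pi.zero_apply] at h2
      exact (mul_eq_zero.1 h2).resolve_left (hA x)
    have hsurj : ∀ w : Fin n → ℂ, ∃ μ : ↥S, Θ μ = w := by
      intro w
      obtain ⟨ν, hνS, hνw⟩ := TT.solSet_exists hccn hcc0 l
        (fun i => if h : i < n then w ⟨i, h⟩ else 0)
      refine ⟨⟨fun x => (dd x)⁻¹ * ν x, ?_⟩, ?_⟩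
      · rw [hmemS]
        intro m
        have hb := bridge ν m
        have h0 : ∑ d ∈ Finset.range (n+1), cc d * ν ((m + l) + d) = 0 :=
          ((TT.mem_solSet _ _).1 hνS) (m + l)
        calc ∑ j ∈ P.support, (P j * dd (j+m)) * ((dd (j+m))⁻¹ * ν (j+m))
            = ∑ j ∈ P.support, P j * ν (j+m) :=
              Finset.sum_congr rfl fun j _ => by
                rw [← mul_assoc, mul_assoc (P j), mul_inv_cancel₀ (hA _), mul_one]
          _ = 0 := by rw [hb, h0]
      · funext i
        show dd (l + ((i:ℕ):ℤ)) * ((dd (l + ((i:ℕ):ℤ)))⁻¹ * ν (l + ((i:ℕ):ℤ))) = w i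
        rw [hνw i.1 i.2]
        rw [← mul_assoc, mul_inv_cancel₀ (hA _), one_mul, dif_pos i.2]
    exact ⟨LinearEquiv.ofBijective Θ
      ⟨LinearMap.ker_eq_bot.1 (LinearMap.ker_eq_bot'.2 hinj), hsurj⟩, trivial⟩
  · -- one zero coefficient at j₀
    push_neg at hA
    obtain ⟨j₀, hj₀⟩ := hA
    have hdd' : ∀ x : ℤ, x ≠ j₀ → dd x ≠ 0 := fun x hx h => hx (hdd_unique x j₀ h hj₀)
    set Θ : ↥S →ₗ[ℂ] (Fin n → ℂ) := {
      toFun := fun μ => fun i => if (i : ℕ) = 0 then μ.1 j₀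
        else dd (j₀ + ((i:ℕ):ℤ)) * μ.1 (j₀ + ((i:ℕ):ℤ)),
      map_add' := by
        intro μ ν
        funext i
        by_cases h : (i : ℕ) = 0 <;>
          simp only [h, if_true, if_false, Submodule.coe_add, Pi.add_apply, reduceIte] <;> ring
      map_smul' := by
        intro a μ
        funext i
        by_cases h : (i : ℕ) = 0 <;>
          simp only [h, if_true, if_false, SetLike.val_smul, Pi.smul_apply, smul_eq_mul,
            RingHom.id_apply, reduceIte] <;> ring } with hΘ
    have hinj : ∀ μ : ↥S, Θ μ = 0 → μ = 0 := by
      intro μ hμ0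
      have hν := hsol μ.1 μ.2
      have hw : ∀ i : ℕ, i < n → (fun x => dd x * μ.1 x) (j₀ + (i:ℤ)) = 0 := by
        intro i hi
        by_cases h : i = 0
        · subst h
          simp only [Nat.cast_zero, add_zero]
          rw [hj₀, zero_mul]
        · have h1 := congrFun hμ0 ⟨i, hi⟩
          simpa [hΘ, h] using h1
      have hz := TT.solSet_unique hccn hcc0 hν j₀ hw
      refine Subtype.ext (funext fun x => ?_)
      by_cases hx : x = j₀
      · subst hx
        have h1 := congrFun hμ0 ⟨0, hnpos⟩
        simpa [hΘ] using h1
      · have h2 := congrFun hz x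
        simp only [Pi.zero_apply] at h2
        exact (mul_eq_zero.1 h2).resolve_left (hdd' x hx)
    have hsurj : ∀ w : Fin n → ℂ, ∃ μ : ↥S, Θ μ = w := by
      intro w
      obtain ⟨ν, hνS, hνw⟩ := TT.solSet_exists hccn hcc0 j₀
        (fun i => if i = 0 then 0 else (if h : i < n then w ⟨i, h⟩ else 0))
      have hν0 : ν j₀ = 0 := by
        have h1 := hνw 0 hnpos
        simpa using h1
      refine ⟨⟨fun x => if x = j₀ then w ⟨0, hnpos⟩ else (dd x)⁻¹ * ν x, ?_⟩, ?_⟩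
      · rw [hmemS]
        intro m
        have hb := bridge ν m
        have h0 : ∑ d ∈ Finset.range (n+1), cc d * ν ((m + l) + d) = 0 :=
          ((TT.mem_solSet _ _).1 hνS) (m + l)
        have hterm : ∀ j ∈ P.support, (P j * dd (j+m)) *
            (if j + m = j₀ then w ⟨0, hnpos⟩ else (dd (j+m))⁻¹ * ν (j+m)) = P j * ν (j+m) := by
          intro j _
          by_cases h : j + m = j₀
          · rw [if_pos h, h, hj₀, hν0]
            ring
          · rw [if_neg h, ← mul_assoc, mul_assoc (P j), mul_inv_cancel₀ (hdd' _ h), mul_one]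
        rw [Finset.sum_congr rfl hterm, hb, h0]
      · funext i
        by_cases hi0 : (i : ℕ) = 0
        · show (if (i:ℕ) = 0 then (if j₀ = j₀ then w ⟨0, hnpos⟩ else _) else _) = w i
          rw [if_pos hi0, if_pos rfl]
          congr 1
          exact (Fin.ext hi0.symm : (⟨0, hnpos⟩ : Fin n) = i)
        · have hne : j₀ + ((i:ℕ):ℤ) ≠ j₀ := by
            have : ((i:ℕ):ℤ) ≠ 0 := by exact_mod_cast hi0
            omega
          show (if (i:ℕ) = 0 then _ else dd (j₀ + ((i:ℕ):ℤ)) *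
            (if j₀ + ((i:ℕ):ℤ) = j₀ then w ⟨0, hnpos⟩ else (dd (j₀ + ((i:ℕ):ℤ)))⁻¹ * ν (j₀ + ((i:ℕ):ℤ)))) = w i
          rw [if_neg hi0, if_neg hne, ← mul_assoc, mul_inv_cancel₀ (hdd' _ hne), one_mul,
            hνw i.1 i.2, if_neg hi0, dif_pos i.2]
    exact ⟨LinearEquiv.ofBijective Θ
      ⟨LinearMap.ker_eq_bot.1 (LinearMap.ker_eq_bot'.2 hinj), hsurj⟩, trivial⟩
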